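/- Under the CATₓ construction with parameters K ≥ L ≥ T ≥ 2, the total number of distinct entries in the cyclic-addition degree table is N = (K+1)(L+1) + (T−1)² + κ + λ, i.e., |TL ∪ TR ∪ BL ∪ BR| = (K+1)(L+1) + (T−1)² + κ + λ. -/

import Mathlib

lemma exists_coprime_small (a t : ℕ) (ht : 1 ≤ t) : ∃ m < t, Nat.Coprime (a + m) t := by
  rcases eq_or_lt_of_le ht with h1 | h2
  · exact ⟨0, by omega, by rw [← h1]; exact Nat.coprime_one_right _⟩
  · have hdm : a = t * (a / t) + a % t := (Nat.div_add_mod a t).symm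
    have hrt : a % t < t := Nat.mod_lt a (by omega)
    rcases (by omega : a % t = 0 ∨ a % t = 1 ∨ 2 ≤ a % t) with h | h | h
    · refine ⟨1, h2, ?_⟩
      have e : a + 1 = t * (a / t) + 1 := by omega
      rw [e]
      exact (Nat.coprime_mul_left_add_left 1 t (a / t)).2 (Nat.coprime_one_left t)
    · refine ⟨0, by omega, ?_⟩
      have e : a + 0 = t * (a / t) + 1 := by omega
      rw [e]
      exact (Nat.coprime_mul_left_add_left 1 t (a / t)).2 (Nat.coprime_one_left t)
    · refine ⟨t + 1 - a % t, by omega, ?_⟩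
      have e2 : t * (a / t + 1) = t * (a / t) + t := by ring
      have e : a + (t + 1 - a % t) = t * (a / t + 1) + 1 := by omega
      rw [e]
      exact (Nat.coprime_mul_left_add_left 1 t (a / t + 1)).2 (Nat.coprime_one_left t)

/-- Only small lattice coefficients are possible given the box bounds. -/
lemma cat_small (K L t κ lam m n A B : ℤ)
    (ht : 1 ≤ t) (htL : t + 1 ≤ L) (hLK : L ≤ K)
    (hκ0 : 0 ≤ κ) (hκt : κ < t) (hlam0 : 0 ≤ lam) (hlamt : lam < t)
    (hA : A = m * (K + 1 + κ) - n * t) (hB : B = m * t + n * (L + 1 + lam))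
    (hA1 : -(K + t) ≤ A) (hA2 : A ≤ K + t) (hB1 : -(L + t) ≤ B) (hB2 : B ≤ L + t) :
    (m = 0 ∧ n = 0) ∨ (m = 1 ∧ n = 0) ∨ (m = -1 ∧ n = 0) ∨
    (m = 0 ∧ n = 1) ∨ (m = 0 ∧ n = -1) := by
  rcases (by omega : m = 0 ∨ 1 ≤ m ∨ m ≤ -1) with hm | hm | hm
  · subst hm
    rcases (by omega : n = 0 ∨ n = 1 ∨ n = -1 ∨ 2 ≤ n ∨ n ≤ -2) with h|h|h|h|h
    · exact Or.inl ⟨rfl, h⟩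
    · exact Or.inr (Or.inr (Or.inr (Or.inl ⟨rfl, h⟩)))
    · exact Or.inr (Or.inr (Or.inr (Or.inr ⟨rfl, h⟩)))
    · exfalso
      have h1 : 0 ≤ (n - 2) * (L + 1 + lam) := mul_nonneg (by omega) (by omega)
      nlinarith
    · exfalso
      have h1 : 0 ≤ (-n - 2) * (L + 1 + lam) := mul_nonneg (by omega) (by omega)
      nlinarith
  · rcases (by omega : n = 0 ∨ 1 ≤ n ∨ n ≤ -1) with hn | hn | hn
    · subst hn
      rcases (by omega : m = 1 ∨ 2 ≤ m) with h|h
      · exact Or.inr (Or.inl ⟨h, rfl⟩)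
      · exfalso
        have h1 : 0 ≤ (m - 2) * (K + 1 + κ) := mul_nonneg (by omega) (by omega)
        nlinarith
    · exfalso
      have h1 : 0 ≤ (m - 1) * t := mul_nonneg (by omega) (by omega)
      have h2 : 0 ≤ (n - 1) * (L + 1 + lam) := mul_nonneg (by omega) (by omega)
      nlinarith
    · exfalso
      have h1 : 0 ≤ (m - 1) * (K + 1 + κ) := mul_nonneg (by omega) (by omega)
      have h2 : 0 ≤ (-n - 1) * t := mul_nonneg (by omega) (by omega)
      nlinarith
  · rcases (by omega : n = 0 ∨ 1 ≤ n ∨ n ≤ -1) with hn | hn | hn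
    · subst hn
      rcases (by omega : m = -1 ∨ m ≤ -2) with h|h
      · exact Or.inr (Or.inr (Or.inl ⟨h, rfl⟩))
      · exfalso
        have h1 : 0 ≤ (-m - 2) * (K + 1 + κ) := mul_nonneg (by omega) (by omega)
        nlinarith
    · exfalso
      have h1 : 0 ≤ (-m - 1) * (K + 1 + κ) := mul_nonneg (by omega) (by omega)
      have h2 : 0 ≤ (n - 1) * t := mul_nonneg (by omega) (by omega)
      nlinarith
    · exfalso
      have h1 : 0 ≤ (-m - 1) * t := mul_nonneg (by omega) (by omega)
      have h2 : 0 ≤ (-n - 1) * (L + 1 + lam) := mul_nonneg (by omega) (by omega)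
      nlinarith

lemma cat_rel2 (q : ℕ) (x y Ks Ls t : ℤ)
    (hq : (q : ℤ) = Ks * Ls + t * t)
    (h1 : (q : ℤ) ∣ x * t + y * Ks)
    (hKt : IsCoprime Ks t) :
    (q : ℤ) ∣ x * Ls - y * t := by
  have hKq : IsCoprime Ks (q : ℤ) := by
    rw [hq, add_comm]
    exact (hKt.mul_right hKt).add_mul_left_right Ls
  have d1 : (q : ℤ) ∣ (x * t + y * Ks) * t := h1.mul_right t
  have d2 : (q : ℤ) ∣ x * (q : ℤ) := dvd_mul_left _ _
  have d3 : (q : ℤ) ∣ Ks * (x * Ls - y * t) := by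
    have := dvd_sub d2 d1
    rw [hq] at this
    have e : Ks * (x * Ls - y * t) = x * (Ks * Ls + t * t) - (x * t + y * Ks) * t := by ring
    rw [e, hq]
    exact this
  exact hKq.symm.dvd_of_dvd_mul_left d3

lemma cat_ker (q : ℕ) (hq0 : 0 < q) (x y Ks Ls t : ℤ)
    (hq : (q : ℤ) = Ks * Ls + t * t)
    (h1 : (q : ℤ) ∣ x * t + y * Ks)
    (hx : IsCoprime x (q : ℤ))
    (hKt : IsCoprime Ks t) (hLt : IsCoprime Ls t)
    (a b : ℤ) (h : (q : ℤ) ∣ y * a + x * b) :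
    ∃ m n : ℤ, a = m * Ks - n * t ∧ b = m * t + n * Ls := by
  have h2 : (q : ℤ) ∣ x * Ls - y * t := cat_rel2 q x y Ks Ls t hq h1 hKt
  have htq : IsCoprime t (q : ℤ) := by
    rw [hq]
    exact (hKt.symm.mul_right hLt.symm).add_mul_left_right t
  have hyq : IsCoprime y (q : ℤ) := by
    obtain ⟨c, hc⟩ := h1
    have hrw : y * Ks = -(x * t) + c * (q : ℤ) := by linear_combination hc
    have h3 : IsCoprime (y * Ks) (q : ℤ) := by
      rw [hrw]
      exact (hx.mul_left htq).neg_left.add_mul_right_left c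
    exact h3.of_mul_left_left
  have dA : (q : ℤ) ∣ Ls * a + t * b := by
    have hh : (q : ℤ) ∣ Ls * (y * a + x * b) - b * (x * Ls - y * t) := dvd_sub (h.mul_left _) (h2.mul_left _)
    have : (q : ℤ) ∣ y * (Ls * a + t * b) := by convert hh using 1; ring
    exact hyq.symm.dvd_of_dvd_mul_left this
  have dB : (q : ℤ) ∣ Ks * b - t * a := by
    have hh : (q : ℤ) ∣ Ks * (y * a + x * b) - a * (x * t + y * Ks) := dvd_sub (h.mul_left _) (h1.mul_left _)
    have : (q : ℤ) ∣ x * (Ks * b - t * a) := by convert hh using 1; ring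
    exact hx.symm.dvd_of_dvd_mul_left this
  obtain ⟨m, hm⟩ := dA
  obtain ⟨n, hn⟩ := dB
  have hqne : (q : ℤ) ≠ 0 := by exact_mod_cast hq0.ne'
  refine ⟨m, n, ?_, ?_⟩
  · apply mul_left_cancel₀ hqne
    linear_combination Ks * hm - t * hn + a * hq
  · apply mul_left_cancel₀ hqne
    linear_combination t * hm + Ls * hn + b * hq
set_option maxHeartbeats 1000000 in
theorem stmt15 (K L T : ℕ) (hT : 2 ≤ T) (hLT : T ≤ L) (hKL : L ≤ K)
    (κ lam : ℕ)
    (hκ : Nat.Coprime (K + 1 + κ) (T - 1)) (hκmin : ∀ m < κ, ¬ Nat.Coprime (K + 1 + m) (T - 1))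
    (hlam : Nat.Coprime (L + 1 + lam) (T - 1))
    (hlammin : ∀ m < lam, ¬ Nat.Coprime (L + 1 + m) (T - 1))
    (q : ℕ) (hq : q = (K + 1 + κ) * (L + 1 + lam) + (T - 1) ^ 2)
    (x y : ℤ) (hx : Int.gcd x q = 1) (hy : (q : ℤ) ∣ x * (T - 1 : ℕ) + y * (K + 1 + κ : ℕ)) :
    ({z : ZMod q | ∃ i < K, ∃ j < L,
        z = (y : ZMod q) * (i : ℕ) + (x : ZMod q) * (j : ℕ)} ∪
     {z : ZMod q | ∃ i < K, ∃ j < T,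
        z = (y : ZMod q) * (i : ℕ) + ((y : ZMod q) * (j : ℕ) - (x : ZMod q))} ∪
     {z : ZMod q | ∃ i < T, ∃ j < L,
        z = ((x : ZMod q) * (i : ℕ) + (K : ZMod q) * (y : ZMod q)) + (x : ZMod q) * (j : ℕ)} ∪
     {z : ZMod q | ∃ i < T, ∃ j < T,
        z = ((x : ZMod q) * (i : ℕ) + (K : ZMod q) * (y : ZMod q))
          + ((y : ZMod q) * (j : ℕ) - (x : ZMod q))}).ncard
      = (K + 1) * (L + 1) + (T - 1) ^ 2 + κ + lam := by
  classical
  set t := T - 1 with htdef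
  have ht1 : 1 ≤ t := by omega
  have hκt : κ < t := by
    obtain ⟨m, hmt, hmc⟩ := exists_coprime_small (K + 1) t ht1
    by_contra hcon
    exact hκmin m (by omega) hmc
  have hlamt : lam < t := by
    obtain ⟨m, hmt, hmc⟩ := exists_coprime_small (L + 1) t ht1
    by_contra hcon
    exact hlammin m (by omega) hmc
  have hq0 : 0 < q := by
    rw [hq]; positivity
  haveI : NeZero q := ⟨hq0.ne'⟩
  have hqz : (q : ℤ) = ((K : ℤ) + 1 + κ) * ((L : ℤ) + 1 + lam) + (t : ℤ) * (t : ℤ) := by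
    rw [hq]; push_cast; ring
  have hyz : (q : ℤ) ∣ x * (t : ℤ) + y * ((K : ℤ) + 1 + κ) := by
    push_cast at hy; exact hy
  have hxz : IsCoprime x (q : ℤ) := Int.isCoprime_iff_gcd_eq_one.2 hx
  have hKt : IsCoprime ((K : ℤ) + 1 + κ) (t : ℤ) := by
    have h2 : IsCoprime ((K + 1 + κ : ℕ) : ℤ) ((t : ℕ) : ℤ) := hκ.isCoprime
    push_cast at h2; exact h2
  have hLt : IsCoprime ((L : ℤ) + 1 + lam) (t : ℤ) := by
    have h2 : IsCoprime ((L + 1 + lam : ℕ) : ℤ) ((t : ℕ) : ℤ) := hlam.isCoprime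
    push_cast at h2; exact h2
  have rel2 : (q : ℤ) ∣ x * ((L : ℤ) + 1 + lam) - y * (t : ℤ) :=
    cat_rel2 q x y _ _ _ hqz hyz hKt
  set G : ℤ × ℤ → ZMod q := fun p => ((y * p.1 + x * p.2 : ℤ) : ZMod q) with hG
  have hGeq : ∀ a b a' b' : ℤ, ((q : ℤ) ∣ (y * (a - a') + x * (b - b'))) →
      G (a, b) = G (a', b') := by
    intro a b a' b' h
    have h0 : ((y * a + x * b : ℤ) : ZMod q) - ((y * a' + x * b' : ℤ) : ZMod q) = 0 := by
      rw [← Int.cast_sub, ZMod.intCast_zmod_eq_zero_iff_dvd]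
      convert h using 1; ring
    simpa [hG, sub_eq_zero] using h0
  have hGinj : ∀ a b a' b' : ℤ, G (a, b) = G (a', b') →
      (q : ℤ) ∣ (y * (a - a') + x * (b - b')) := by
    intro a b a' b' h
    have h0 : ((y * (a - a') + x * (b - b') : ℤ) : ZMod q) = 0 := by
      have e : (y * (a - a') + x * (b - b') : ℤ) = (y * a + x * b) - (y * a' + x * b') := by
        ring
      rw [e, Int.cast_sub]
      simp only [hG] at h
      rw [h, sub_self]
    exact (ZMod.intCast_zmod_eq_zero_iff_dvd _ _).1 h0
  have castnat : ∀ c : ℤ, 0 ≤ c → ((c.toNat : ℕ) : ZMod q) = ((c : ℤ) : ZMod q) := by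
    intro c hc
    rw [← Int.cast_natCast, Int.toNat_of_nonneg hc]
  -- the index Finset
  set S1 : Finset (ℤ × ℤ) := (Finset.Icc 0 ((K : ℤ) - 1)) ×ˢ (Finset.Icc 0 ((L : ℤ) - 1))
    with hS1
  set S2 : Finset (ℤ × ℤ) := (Finset.Icc 0 ((K : ℤ) + t)) ×ˢ ({(-1 : ℤ)} : Finset ℤ) with hS2
  set S3 : Finset (ℤ × ℤ) := ({((K : ℤ))} : Finset ℤ) ×ˢ (Finset.Icc 0 ((L : ℤ) + lam - 1))
    with hS3
  set S4 : Finset (ℤ × ℤ) := (Finset.Icc ((K : ℤ) + 1) ((K : ℤ) + t)) ×ˢ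
    (Finset.Icc 0 ((t : ℤ) - 2)) with hS4
  set S5 : Finset (ℤ × ℤ) := (Finset.Icc ((K : ℤ) + 1) ((K : ℤ) + κ)) ×ˢ
    ({((t : ℤ) - 1)} : Finset ℤ) with hS5
  set S : Finset (ℤ × ℤ) := S1 ∪ S2 ∪ S3 ∪ S4 ∪ S5 with hS
  have memS : ∀ a b : ℤ, (a, b) ∈ S ↔
      ((0 ≤ a ∧ a ≤ (K : ℤ) - 1 ∧ 0 ≤ b ∧ b ≤ (L : ℤ) - 1) ∨
       (0 ≤ a ∧ a ≤ (K : ℤ) + t ∧ b = -1) ∨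
       (a = (K : ℤ) ∧ 0 ≤ b ∧ b ≤ (L : ℤ) + lam - 1) ∨
       ((K : ℤ) + 1 ≤ a ∧ a ≤ (K : ℤ) + t ∧ 0 ≤ b ∧ b ≤ (t : ℤ) - 2) ∨
       ((K : ℤ) + 1 ≤ a ∧ a ≤ (K : ℤ) + κ ∧ b = (t : ℤ) - 1)) := by
    intro a b
    simp only [hS, hS1, hS2, hS3, hS4, hS5, Finset.mem_union, Finset.mem_product,
      Finset.mem_Icc, Finset.mem_singleton]
    omega
  -- shifts
  have shiftV' : ∀ a b : ℤ, G (a + t, b - ((L : ℤ) + 1 + lam)) = G (a, b) := by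
    intro a b
    apply hGeq
    rw [show y * ((a + t) - a) + x * ((b - ((L : ℤ) + 1 + lam)) - b)
        = -(x * ((L : ℤ) + 1 + lam) - y * (t : ℤ)) by ring]
    exact dvd_neg.2 rel2
  have shiftU' : ∀ a b : ℤ, G (a - ((K : ℤ) + 1 + κ), b - t) = G (a, b) := by
    intro a b
    apply hGeq
    rw [show y * ((a - ((K : ℤ) + 1 + κ)) - a) + x * ((b - t) - b)
        = -(x * (t : ℤ) + y * ((K : ℤ) + 1 + κ)) by ring]
    exact dvd_neg.2 hyz
  -- main set equality
  have hmain : ({z : ZMod q | ∃ i < K, ∃ j < L,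
        z = (y : ZMod q) * (i : ℕ) + (x : ZMod q) * (j : ℕ)} ∪
     {z : ZMod q | ∃ i < K, ∃ j < T,
        z = (y : ZMod q) * (i : ℕ) + ((y : ZMod q) * (j : ℕ) - (x : ZMod q))} ∪
     {z : ZMod q | ∃ i < T, ∃ j < L,
        z = ((x : ZMod q) * (i : ℕ) + (K : ZMod q) * (y : ZMod q)) + (x : ZMod q) * (j : ℕ)} ∪
     {z : ZMod q | ∃ i < T, ∃ j < T,
        z = ((x : ZMod q) * (i : ℕ) + (K : ZMod q) * (y : ZMod q))
          + ((y : ZMod q) * (j : ℕ) - (x : ZMod q))}) = ↑(S.image G) := by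
    ext z
    simp only [Set.mem_union, Set.mem_setOf_eq, Finset.coe_image, Set.mem_image,
      Finset.mem_coe]
    constructor
    · rintro (((⟨i, hi, j, hj, rfl⟩ | ⟨i, hi, j, hj, rfl⟩) | ⟨i, hi, j, hj, rfl⟩) |
        ⟨i, hi, j, hj, rfl⟩)
      · -- TL
        refine ⟨((i : ℤ), (j : ℤ)), (memS _ _).2 (by omega), ?_⟩
        simp only [hG]; push_cast; ring
      · -- TR
        refine ⟨((i : ℤ) + (j : ℤ), -1), (memS _ _).2 (by omega), ?_⟩
        simp only [hG]; push_cast; ring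
      · -- BL
        by_cases hc : (i : ℤ) + (j : ℤ) ≤ (L : ℤ) + lam - 1
        · refine ⟨((K : ℤ), (i : ℤ) + (j : ℤ)), (memS _ _).2 (by omega), ?_⟩
          simp only [hG]; push_cast; ring
        · push_neg at hc
          refine ⟨((K : ℤ) + t, ((i : ℤ) + (j : ℤ)) - ((L : ℤ) + 1 + lam)),
            (memS _ _).2 (by omega), ?_⟩
          refine (shiftV' ((K : ℤ)) ((i : ℤ) + (j : ℤ))).trans ?_
          simp only [hG]; push_cast; ring
      · -- BR
        by_cases hc : (i : ℤ) - 1 = (t : ℤ) - 1 ∧ (κ : ℤ) + 1 ≤ (j : ℤ)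
        · refine ⟨(((K : ℤ) + j) - ((K : ℤ) + 1 + κ), ((i : ℤ) - 1) - t),
            (memS _ _).2 (by omega), ?_⟩
          refine (shiftU' ((K : ℤ) + (j : ℤ)) ((i : ℤ) - 1)).trans ?_
          simp only [hG]; push_cast; ring
        · refine ⟨((K : ℤ) + (j : ℤ), (i : ℤ) - 1), (memS _ _).2 (by omega), ?_⟩
          simp only [hG]; push_cast; ring
    · rintro ⟨⟨a, b⟩, hp, rfl⟩
      rw [memS] at hp
      rcases hp with ⟨ha1, ha2, hb1, hb2⟩ | ⟨ha1, ha2, rfl⟩ | ⟨rfl, hb1, hb2⟩ |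
        ⟨ha1, ha2, hb1, hb2⟩ | ⟨ha1, ha2, rfl⟩
      · -- S1 → TL
        refine Or.inl (Or.inl (Or.inl ⟨a.toNat, by omega, b.toNat, by omega, ?_⟩))
        rw [castnat _ ha1, castnat _ hb1]
        simp only [hG]; push_cast; ring
      · -- S2
        by_cases hc : a ≤ (K : ℤ) + t - 1
        · obtain ⟨i, j, hi, hj, hij⟩ : ∃ i j : ℕ, i < K ∧ j < T ∧ (i : ℤ) + j = a :=
            ⟨(min a ((K : ℤ) - 1)).toNat, (a - min a ((K : ℤ) - 1)).toNat,
              by omega, by omega, by omega⟩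
          refine Or.inl (Or.inl (Or.inr ⟨i, hi, j, hj, ?_⟩))
          rw [show a = (i : ℤ) + (j : ℤ) from hij.symm]
          simp only [hG]; push_cast; ring
        · have ha : a = (K : ℤ) + t := by omega
          subst ha
          refine Or.inl (Or.inr ⟨lam + 1, by omega, L - 1, by omega, ?_⟩)
          have step : G ((K : ℤ) + t, -1) = G ((K : ℤ), (L : ℤ) + lam) := by
            apply hGeq
            rw [show y * (((K : ℤ) + t) - K) + x * ((-1) - ((L : ℤ) + lam))
                = -(x * ((L : ℤ) + 1 + lam) - y * (t : ℤ)) by ring]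
            exact dvd_neg.2 rel2
          refine step.trans ?_
          simp only [hG]
          push_cast [Nat.cast_sub (show 1 ≤ L by omega)]
          ring
      · -- S3 → BL
        obtain ⟨i, j, hi, hj, hij⟩ : ∃ i j : ℕ, i < T ∧ j < L ∧ (i : ℤ) + j = b :=
          ⟨(b - min b ((L : ℤ) - 1)).toNat, (min b ((L : ℤ) - 1)).toNat,
            by omega, by omega, by omega⟩
        refine Or.inl (Or.inr ⟨i, hi, j, hj, ?_⟩)
        rw [show b = (i : ℤ) + (j : ℤ) from hij.symm]
        simp only [hG]; push_cast; ring
      · -- S4 → BR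
        refine Or.inr ⟨(b + 1).toNat, by omega, (a - (K : ℤ)).toNat, by omega, ?_⟩
        rw [castnat _ (by omega), castnat _ (by omega)]
        simp only [hG]; push_cast; ring
      · -- S5 → BR
        refine Or.inr ⟨t, by omega, (a - (K : ℤ)).toNat, by omega, ?_⟩
        rw [castnat _ (by omega)]
        simp only [hG]; push_cast; ring
  -- injectivity
  have hinj : Set.InjOn G ↑S := by
    rintro ⟨a, b⟩ ha ⟨a', b'⟩ hb hGab
    simp only [Finset.mem_coe] at ha hb
    rw [memS] at ha hb
    have hd := hGinj a b a' b' hGab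
    obtain ⟨m, n, e1, e2⟩ := cat_ker q hq0 x y _ _ _ hqz hyz hxz hKt hLt (a - a') (b - b') hd
    have hsmall := cat_small (K : ℤ) (L : ℤ) (t : ℤ) (κ : ℤ) (lam : ℤ) m n (a - a') (b - b')
      (by omega) (by omega) (by omega) (by omega) (by omega) (by omega) (by omega)
      e1 e2 (by omega) (by omega) (by omega) (by omega)
    rcases hsmall with ⟨hm, hn⟩ | ⟨hm, hn⟩ | ⟨hm, hn⟩ | ⟨hm, hn⟩ | ⟨hm, hn⟩ <;>
      subst hm <;> subst hn <;> norm_num at e1 e2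
    · have : a = a' ∧ b = b' := by omega
      rw [this.1, this.2]
    · exfalso; omega
    · exfalso; omega
    · exfalso; omega
    · exfalso; omega
  -- cardinalities
  have c1 : S1.card = K * L := by
    rw [hS1, Finset.card_product, Int.card_Icc, Int.card_Icc]
    congr 1 <;> omega
  have c2 : S2.card = K + t + 1 := by
    rw [hS2, Finset.card_product, Int.card_Icc, Finset.card_singleton, mul_one]
    omega
  have c3 : S3.card = L + lam := by
    rw [hS3, Finset.card_product, Finset.card_singleton, Int.card_Icc, one_mul]
    omega
  have c4 : S4.card = t * (t - 1) := by
    rw [hS4, Finset.card_product, Int.card_Icc, Int.card_Icc]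
    congr 1 <;> omega
  have c5 : S5.card = κ := by
    rw [hS5, Finset.card_product, Int.card_Icc, Finset.card_singleton, mul_one]
    omega
  have d2 : Disjoint S1 S2 := by
    rw [Finset.disjoint_left]
    rintro ⟨a, b⟩ hp hp'
    simp only [hS1, hS2, Finset.mem_product, Finset.mem_Icc, Finset.mem_singleton] at hp hp'
    omega
  have d3 : Disjoint (S1 ∪ S2) S3 := by
    rw [Finset.disjoint_left]
    rintro ⟨a, b⟩ hp hp'
    simp only [hS1, hS2, hS3, Finset.mem_union, Finset.mem_product, Finset.mem_Icc,
      Finset.mem_singleton] at hp hp'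
    omega
  have d4 : Disjoint (S1 ∪ S2 ∪ S3) S4 := by
    rw [Finset.disjoint_left]
    rintro ⟨a, b⟩ hp hp'
    simp only [hS1, hS2, hS3, hS4, Finset.mem_union, Finset.mem_product, Finset.mem_Icc,
      Finset.mem_singleton] at hp hp'
    omega
  have d5 : Disjoint (S1 ∪ S2 ∪ S3 ∪ S4) S5 := by
    rw [Finset.disjoint_left]
    rintro ⟨a, b⟩ hp hp'
    simp only [hS1, hS2, hS3, hS4, hS5, Finset.mem_union, Finset.mem_product, Finset.mem_Icc,
      Finset.mem_singleton] at hp hp'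
    omega
  have hcard : S.card = K * L + (K + t + 1) + (L + lam) + t * (t - 1) + κ := by
    rw [hS, Finset.card_union_of_disjoint d5, Finset.card_union_of_disjoint d4,
      Finset.card_union_of_disjoint d3, Finset.card_union_of_disjoint d2, c1, c2, c3, c4, c5]
  rw [hmain, Set.ncard_coe_finset, Finset.card_image_of_injOn hinj, hcard]
  have e1 : (K + 1) * (L + 1) = K * L + K + L + 1 := by ring
  have e2 : t ^ 2 = t * (t - 1) + t := by
    obtain ⟨s, hs⟩ := Nat.exists_eq_add_of_le ht1
    rw [hs]
    simp [Nat.add_sub_cancel_left]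
    ring
  omega
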